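/- Let n ≥ 1, let L be a finite index set, for each l ∈ L let i_l ≠ j_l be indices in {1,…,n}, let h : {0,1}^n × {0,1}^L → ℝ, and let M be a real number with M > 0 and M > (max h − min h), where max and min are taken over the finite domain {0,1}^n × {0,1}^L. Then the maximum over all (x,y) ∈ {0,1}^n × {0,1}^L of h(x,y) − M·Σ_{l∈L} p(x_{i_l}, x_{j_l}, y_l) equals the maximum over all x ∈ {0,1}^n of h(x, (x_{i_l}·x_{j_l})_{l∈L}). -/
import Mathlib


/-- The Rosenberg penalty `p(a,b,y) = a·b − 2·a·y − 2·b·y + 3·y` on real arguments. -/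
noncomputable def rosP (a b y : ℝ) : ℝ := a * b - 2 * a * y - 2 * b * y + 3 * y

lemma rosP_nonneg (a b y : Fin 2) :
    0 ≤ rosP ((a : ℕ) : ℝ) ((b : ℕ) : ℝ) ((y : ℕ) : ℝ) := by
  fin_cases a <;> fin_cases b <;> fin_cases y <;> norm_num [rosP]

lemma rosP_eq_zero (a b : Fin 2) :
    rosP ((a : ℕ) : ℝ) ((b : ℕ) : ℝ) (((a * b : Fin 2) : ℕ) : ℝ) = 0 := by
  fin_cases a <;> fin_cases b <;> norm_num [rosP]

lemma rosP_one_le (a b y : Fin 2) (hy : y ≠ a * b) :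
    1 ≤ rosP ((a : ℕ) : ℝ) ((b : ℕ) : ℝ) ((y : ℕ) : ℝ) := by
  fin_cases a <;> fin_cases b <;> fin_cases y <;> simp_all <;> norm_num [rosP]

/-- Let `n ≥ 1`, `L` a finite index set, for each `l ∈ L` indices `i_l ≠ j_l`,
`h : {0,1}^n × {0,1}^L → ℝ`, and `M` a real with `M > 0` and `M > max h − min h` (over the
finite domain).  Then the maximum over `(x,y) ∈ {0,1}^n × {0,1}^L` of
`h(x,y) − M·Σ_{l∈L} p(x_{i_l}, x_{j_l}, y_l)` equals the maximum over `x ∈ {0,1}^n` of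
`h(x, (x_{i_l}·x_{j_l})_{l∈L})`. -/
theorem stmt_8 (n : ℕ) (hn : 1 ≤ n)
    {L : Type*} [Fintype L]
    (i j : L → Fin n) (hij : ∀ l : L, i l ≠ j l)
    (h : ((Fin n → Fin 2) × (L → Fin 2)) → ℝ)
    (M : ℝ) (hM0 : 0 < M)
    (hM : (⨆ z : (Fin n → Fin 2) × (L → Fin 2), h z) -
          (⨅ z : (Fin n → Fin 2) × (L → Fin 2), h z) < M) :
    (⨆ z : (Fin n → Fin 2) × (L → Fin 2),
        (h z - M * ∑ l : L,
          rosP ((z.1 (i l) : ℕ) : ℝ) ((z.1 (j l) : ℕ) : ℝ) ((z.2 l : ℕ) : ℝ))) =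
    ⨆ x : Fin n → Fin 2, h (x, fun l => x (i l) * x (j l)) := by
  set F : ((Fin n → Fin 2) × (L → Fin 2)) → ℝ := fun z =>
    h z - M * ∑ l : L,
      rosP ((z.1 (i l) : ℕ) : ℝ) ((z.1 (j l) : ℕ) : ℝ) ((z.2 l : ℕ) : ℝ) with hF
  set G : (Fin n → Fin 2) → ℝ := fun x => h (x, fun l => x (i l) * x (j l)) with hG
  have bddF : BddAbove (Set.range F) := Finite.bddAbove_range F
  have bddG : BddAbove (Set.range G) := Finite.bddAbove_range G
  have bddh : BddAbove (Set.range h) := Finite.bddAbove_range h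
  have bddhb : BddBelow (Set.range h) := Finite.bddBelow_range h
  have hFgood : ∀ x : Fin n → Fin 2, F (x, fun l => x (i l) * x (j l)) = G x := by
    intro x
    have : (∑ l : L, rosP ((x (i l) : ℕ) : ℝ) ((x (j l) : ℕ) : ℝ)
        (((x (i l) * x (j l) : Fin 2) : ℕ) : ℝ)) = 0 :=
      Finset.sum_eq_zero fun l _ => rosP_eq_zero _ _
    simp [hF, hG, this]
  apply le_antisymm
  · apply ciSup_le
    intro z
    by_cases hz : z.2 = fun l => z.1 (i l) * z.1 (j l)
    · have : F z = G z.1 := by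
        have : z = (z.1, fun l => z.1 (i l) * z.1 (j l)) := by
          rw [← hz]
        rw [this, hFgood]
      rw [this]
      exact le_ciSup bddG z.1
    · obtain ⟨l, hl⟩ := Function.ne_iff.mp hz
      have h1 : 1 ≤ ∑ l : L,
          rosP ((z.1 (i l) : ℕ) : ℝ) ((z.1 (j l) : ℕ) : ℝ) ((z.2 l : ℕ) : ℝ) := by
        calc (1:ℝ) ≤ rosP ((z.1 (i l) : ℕ) : ℝ) ((z.1 (j l) : ℕ) : ℝ) ((z.2 l : ℕ) : ℝ) :=
              rosP_one_le _ _ _ hl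
          _ ≤ _ := Finset.single_le_sum
              (f := fun l => rosP ((z.1 (i l) : ℕ) : ℝ) ((z.1 (j l) : ℕ) : ℝ) ((z.2 l : ℕ) : ℝ))
              (fun l _ => rosP_nonneg _ _ _) (Finset.mem_univ l)
      have hFz : F z ≤ h z - M := by
        have := mul_le_mul_of_nonneg_left h1 hM0.le
        simp only [hF]
        linarith
      have h2 : h z ≤ ⨆ z, h z := le_ciSup bddh z
      have h3 : (⨅ z, h z) ≤ G z.1 := ciInf_le bddhb _
      have h4 : G z.1 ≤ ⨆ x, G x := le_ciSup bddG z.1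
      linarith
  · apply ciSup_le
    intro x
    rw [← hFgood x]
    exact le_ciSup bddF _
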